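/- For |q| < 1, |z| < 1 and a ∈ ℂ, the q-binomial theorem holds: (az;q)_∞ / (z;q)_∞ = Σ_{j≥0} ((a;q)_j / (q;q)_j) z^j, where the series converges absolutely. -/

import Mathlib

open Filter Complex

noncomputable def qPoch (z q : ℂ) (n : ℕ) : ℂ := ∏ i ∈ Finset.range n, (1 - z * q ^ i)

lemma aux_log_summable (w q : ℂ) (hq : ‖q‖ < 1) :
    Summable (fun l : ℕ => Complex.log (1 - w * q ^ l)) := by
  apply Summable.of_norm_bounded_eventually_nat (g := fun l => 3/2 * (‖w‖ * ‖q‖ ^ l))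
  · exact ((summable_geometric_of_lt_one (norm_nonneg q) hq).mul_left ‖w‖).mul_left _
  · have h0 : Tendsto (fun l : ℕ => ‖w‖ * ‖q‖ ^ l) atTop (nhds 0) := by
      simpa using (tendsto_pow_atTop_nhds_zero_of_lt_one (norm_nonneg q) hq).const_mul ‖w‖
    filter_upwards [h0.eventually_le_const (by norm_num : (0:ℝ) < 1/2)] with l hl
    have hn : ‖-(w * q ^ l)‖ ≤ 1/2 := by
      simpa [norm_mul, norm_pow] using hl
    have := Complex.norm_log_one_add_half_le_self hn
    simpa [norm_mul, norm_pow, sub_eq_add_neg] using this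

lemma aux_hasprod (w q : ℂ) (hq : ‖q‖ < 1) :
    HasProd (fun l : ℕ => 1 - w * q ^ l) (∏' l : ℕ, (1 - w * q ^ l)) := by
  by_cases hz : ∀ l : ℕ, 1 - w * q ^ l ≠ 0
  · exact (Complex.multipliable_of_summable_log (aux_log_summable w q hq)).hasProd
  · push_neg at hz
    obtain ⟨l0, hl0⟩ := hz
    have hp : HasProd (fun l : ℕ => 1 - w * q ^ l) 0 := by
      rw [HasProd]
      apply Tendsto.congr' _ tendsto_const_nhds
      filter_upwards [Filter.eventually_ge_atTop {l0}] with s hs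
      exact (Finset.prod_eq_zero (hs (Finset.mem_singleton_self l0)) hl0).symm
    rwa [hp.tprod_eq]

lemma aux_tprod_ne_zero (w q : ℂ) (hw : ‖w‖ < 1) (hq : ‖q‖ < 1) :
    (∏' l : ℕ, (1 - w * q ^ l)) ≠ 0 := by
  have hz : ∀ l : ℕ, 1 - w * q ^ l ≠ 0 := by
    intro l
    have : ‖w * q ^ l‖ < 1 := by
      calc ‖w * q ^ l‖ = ‖w‖ * ‖q‖ ^ l := by simp [norm_mul, norm_pow]
      _ ≤ ‖w‖ * 1 := by
          apply mul_le_mul_of_nonneg_left (pow_le_one₀ (norm_nonneg q) hq.le) (norm_nonneg w)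
      _ < 1 := by simpa using hw
    intro h
    rw [sub_eq_zero] at h
    rw [← h] at this
    simp at this
  have h2 := Complex.cexp_tsum_eq_tprod (fun l => hz l) (aux_log_summable w q hq)
  rw [← h2]
  exact Complex.exp_ne_zero _


lemma aux_abs_log_summable {t : ℝ} (ht0 : 0 ≤ t) (ht1 : t < 1) :
    Summable (fun i : ℕ => |Real.log (1 - t ^ (i + 1))|) := by
  have hg : Summable (fun i : ℕ => t / (1 - t) * t ^ i) :=
    (summable_geometric_of_lt_one ht0 ht1).mul_left _
  apply Summable.of_nonneg_of_le (fun i => abs_nonneg _) _ hg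
  intro i
  · 
    have hx0 : 0 ≤ t ^ (i+1) := pow_nonneg ht0 _
    have hx1 : t ^ (i+1) < 1 := pow_lt_one₀ ht0 ht1 (Nat.succ_ne_zero i)
    have hpos : 0 < 1 - t ^ (i+1) := by linarith
    have h1 : |Real.log (1 - t ^ (i+1))| = -Real.log (1 - t ^ (i+1)) := by
      rw [abs_of_nonpos]
      exact Real.log_nonpos (by linarith) (by linarith)
    have h2 : -Real.log (1 - t ^ (i+1)) = Real.log (1 - t ^ (i+1))⁻¹ := by
      rw [Real.log_inv]
    have h3 : Real.log (1 - t ^ (i+1))⁻¹ ≤ (1 - t ^ (i+1))⁻¹ - 1 :=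
      Real.log_le_sub_one_of_pos (by positivity)
    have h4 : (1 - t ^ (i+1))⁻¹ - 1 = t ^ (i+1) / (1 - t ^ (i+1)) := by
      field_simp
      ring
    have h5 : t ^ (i+1) / (1 - t ^ (i+1)) ≤ t ^ (i+1) / (1 - t) := by
      apply div_le_div_of_nonneg_left hx0 (by linarith)
      have h7 : t ^ (i+1) ≤ t := by
        calc t ^ (i+1) = t ^ i * t := by rw [pow_succ]
        _ ≤ 1 * t := by
            apply mul_le_mul_of_nonneg_right (pow_le_one₀ ht0 ht1.le) ht0
        _ = t := one_mul t
      linarith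
    have h6 : t ^ (i+1) / (1 - t) = t / (1 - t) * t ^ i := by
      rw [pow_succ]; ring
    linarith [h1, h3]

lemma aux_qPoch_q_lower (q : ℂ) (hq : ‖q‖ < 1) (j : ℕ) :
    Real.exp (-(∑' i : ℕ, |Real.log (1 - ‖q‖ ^ (i + 1))|)) ≤ ‖qPoch q q j‖ := by
  set t := ‖q‖ with ht
  have ht0 : 0 ≤ t := norm_nonneg q
  have hsum := aux_abs_log_summable ht0 hq
  have hfac : ∀ i : ℕ, (1 : ℝ) - t ^ (i+1) ≤ ‖(1 : ℂ) - q * q ^ i‖ := by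
    intro i
    have h1 : ‖q * q ^ i‖ = t ^ (i+1) := by
      rw [norm_mul, norm_pow, pow_succ]; ring
    calc (1:ℝ) - t ^ (i+1) = ‖(1:ℂ)‖ - ‖q * q ^ i‖ := by rw [h1]; simp
    _ ≤ ‖(1:ℂ) - q * q ^ i‖ := norm_sub_norm_le _ _
  have hpos : ∀ i : ℕ, (0:ℝ) < 1 - t ^ (i+1) := by
    intro i
    have : t ^ (i+1) < 1 := pow_lt_one₀ ht0 hq (Nat.succ_ne_zero i)
    linarith
  calc Real.exp (-(∑' i : ℕ, |Real.log (1 - t ^ (i + 1))|))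
      ≤ Real.exp (∑ i ∈ Finset.range j, Real.log (1 - t ^ (i+1))) := by
        apply Real.exp_le_exp.mpr
        have h1 : ∑ i ∈ Finset.range j, Real.log (1 - t ^ (i+1)) ≥
            ∑ i ∈ Finset.range j, -|Real.log (1 - t ^ (i+1))| := by
          apply Finset.sum_le_sum
          intro i _
          exact neg_abs_le _
        have h2 : ∑ i ∈ Finset.range j, -|Real.log (1 - t ^ (i+1))| =
            -∑ i ∈ Finset.range j, |Real.log (1 - t ^ (i+1))| := by
          rw [Finset.sum_neg_distrib]
        have h3 : ∑ i ∈ Finset.range j, |Real.log (1 - t ^ (i+1))| ≤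
            ∑' i : ℕ, |Real.log (1 - t ^ (i+1))| :=
          Summable.sum_le_tsum _ (fun i _ => abs_nonneg _) hsum
        linarith
  _ = ∏ i ∈ Finset.range j, (1 - t ^ (i+1)) := by
        rw [Real.exp_sum]
        apply Finset.prod_congr rfl
        intro i _
        exact Real.exp_log (hpos i)
  _ ≤ ∏ i ∈ Finset.range j, ‖(1:ℂ) - q * q ^ i‖ := by
        apply Finset.prod_le_prod (fun i _ => (hpos i).le) (fun i _ => hfac i)
  _ = ‖qPoch q q j‖ := by rw [qPoch, norm_prod]

lemma aux_qPoch_upper (a q : ℂ) (hq : ‖q‖ < 1) (j : ℕ) :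
    ‖qPoch a q j‖ ≤ Real.exp (‖a‖ / (1 - ‖q‖)) := by
  set t := ‖q‖ with ht
  have ht0 : 0 ≤ t := norm_nonneg q
  calc ‖qPoch a q j‖ = ∏ i ∈ Finset.range j, ‖(1:ℂ) - a * q ^ i‖ := by rw [qPoch, norm_prod]
  _ ≤ ∏ i ∈ Finset.range j, (1 + ‖a‖ * t ^ i) := by
      apply Finset.prod_le_prod (fun i _ => norm_nonneg _)
      intro i _
      calc ‖(1:ℂ) - a * q ^ i‖ ≤ ‖(1:ℂ)‖ + ‖a * q ^ i‖ := norm_sub_le _ _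
      _ = 1 + ‖a‖ * t ^ i := by rw [norm_mul, norm_pow, norm_one]
  _ ≤ ∏ i ∈ Finset.range j, Real.exp (‖a‖ * t ^ i) := by
      apply Finset.prod_le_prod (fun i _ => by positivity)
      intro i _
      have := Real.add_one_le_exp (‖a‖ * t ^ i)
      linarith
  _ = Real.exp (∑ i ∈ Finset.range j, ‖a‖ * t ^ i) := (Real.exp_sum _ _).symm
  _ ≤ Real.exp (‖a‖ / (1 - t)) := by
      apply Real.exp_le_exp.mpr
      calc ∑ i ∈ Finset.range j, ‖a‖ * t ^ i ≤ ∑' i : ℕ, ‖a‖ * t ^ i := by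
            exact Summable.sum_le_tsum _ (fun i _ => by positivity)
              ((summable_geometric_of_lt_one ht0 hq).mul_left _)
      _ = ‖a‖ * (1 - t)⁻¹ := by
            rw [tsum_mul_left, tsum_geometric_of_lt_one ht0 hq]
      _ = ‖a‖ / (1 - t) := by rw [div_eq_mul_inv]


noncomputable def qc (a q : ℂ) (j : ℕ) : ℂ := qPoch a q j / qPoch q q j

noncomputable def qM (a q : ℂ) : ℝ :=
  Real.exp (‖a‖ / (1 - ‖q‖)) * Real.exp (∑' i : ℕ, |Real.log (1 - ‖q‖ ^ (i + 1))|)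

lemma qPoch_q_ne_zero (q : ℂ) (hq : ‖q‖ < 1) (j : ℕ) : qPoch q q j ≠ 0 := by
  have := aux_qPoch_q_lower q hq j
  have h0 : (0:ℝ) < Real.exp (-(∑' i : ℕ, |Real.log (1 - ‖q‖ ^ (i + 1))|)) := Real.exp_pos _
  intro h
  rw [h, norm_zero] at this
  linarith

lemma qc_bound (a q : ℂ) (hq : ‖q‖ < 1) (j : ℕ) : ‖qc a q j‖ ≤ qM a q := by
  rw [qc, qM, norm_div]
  set T := ∑' i : ℕ, |Real.log (1 - ‖q‖ ^ (i + 1))|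
  have h1 := aux_qPoch_upper a q hq j
  have h2 := aux_qPoch_q_lower q hq j
  have h3 : (0:ℝ) < Real.exp (-T) := Real.exp_pos _
  have h4 : 0 < ‖qPoch q q j‖ := lt_of_lt_of_le h3 h2
  rw [div_le_iff₀ h4]
  calc ‖qPoch a q j‖ ≤ Real.exp (‖a‖ / (1 - ‖q‖)) := h1
  _ = Real.exp (‖a‖ / (1 - ‖q‖)) * Real.exp T * Real.exp (-T) := by
      rw [mul_assoc, ← Real.exp_add]; simp
  _ ≤ Real.exp (‖a‖ / (1 - ‖q‖)) * Real.exp T * ‖qPoch q q j‖ := by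
      apply mul_le_mul_of_nonneg_left h2 (by positivity)

lemma qM_nonneg (a q : ℂ) : 0 ≤ qM a q := by rw [qM]; positivity

lemma qc_rec (a q : ℂ) (hq : ‖q‖ < 1) (j : ℕ) :
    qc a q (j + 1) * (1 - q ^ (j + 1)) = qc a q j * (1 - a * q ^ j) := by
  have hne : qPoch q q j ≠ 0 := qPoch_q_ne_zero q hq j
  have hne2 : (1:ℂ) - q ^ (j+1) ≠ 0 := by
    intro h
    rw [sub_eq_zero] at h
    have : ‖q ^ (j+1)‖ < 1 := by
      rw [norm_pow]
      exact pow_lt_one₀ (norm_nonneg q) hq (Nat.succ_ne_zero j)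
    rw [← h] at this
    simp at this
  have ha : qPoch a q (j+1) = qPoch a q j * (1 - a * q ^ j) := Finset.prod_range_succ _ _
  have hb : qPoch q q (j+1) = qPoch q q j * (1 - q ^ (j+1)) := by
    rw [qPoch, Finset.prod_range_succ, ← qPoch]
    congr 2
    rw [pow_succ]; ring
  rw [qc, qc, ha, hb]
  field_simp

lemma summable_mul_geo (u : ℕ → ℂ) (K : ℝ) (hu : ∀ j, ‖u j‖ ≤ K) (w : ℂ) (hw : ‖w‖ < 1) :
    Summable (fun j : ℕ => u j * w ^ j) := by
  apply Summable.of_norm_bounded (g := fun j => K * ‖w‖ ^ j)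
  · exact (summable_geometric_of_lt_one (norm_nonneg w) hw).mul_left _
  · intro j
    rw [norm_mul, norm_pow]
    exact mul_le_mul_of_nonneg_right (hu j) (by positivity)

noncomputable def qS (a q w : ℂ) : ℂ := ∑' j : ℕ, qc a q j * w ^ j

lemma qS_funct (a q : ℂ) (hq : ‖q‖ < 1) (w : ℂ) (hw : ‖w‖ < 1) :
    (1 - w) * qS a q w = (1 - a * w) * qS a q (q * w) := by
  set M := qM a q with hM
  have hM0 : 0 ≤ M := qM_nonneg a q
  have hcb : ∀ j, ‖qc a q j‖ ≤ M := qc_bound a q hq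
  have hqj : ∀ j : ℕ, ‖q ^ j‖ ≤ 1 := fun j => by
    rw [norm_pow]; exact pow_le_one₀ (norm_nonneg q) hq.le
  -- summable pieces
  have s1 : Summable (fun j : ℕ => qc a q j * (1 - w) * w ^ j) := by
    apply summable_mul_geo _ (M * (1 + ‖w‖)) _ w hw
    intro j
    rw [norm_mul]
    apply mul_le_mul (hcb j) _ (norm_nonneg _) hM0
    calc ‖1 - w‖ ≤ ‖(1:ℂ)‖ + ‖w‖ := norm_sub_le _ _
    _ = 1 + ‖w‖ := by rw [norm_one]
  have s2 : Summable (fun j : ℕ => qc a q j * q ^ j * (1 - a * w) * w ^ j) := by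
    apply summable_mul_geo _ (M * 1 * (1 + ‖a * w‖)) _ w hw
    intro j
    rw [norm_mul, norm_mul]
    apply mul_le_mul _ _ (norm_nonneg _) (by positivity)
    · exact mul_le_mul (hcb j) (hqj j) (norm_nonneg _) hM0
    · calc ‖1 - a * w‖ ≤ ‖(1:ℂ)‖ + ‖a * w‖ := norm_sub_le _ _
      _ = 1 + ‖a * w‖ := by rw [norm_one]
  have sg : Summable (fun j : ℕ => qc a q j * (1 - q ^ j) * w ^ j) := by
    apply summable_mul_geo _ (M * 2) _ w hw
    intro j
    rw [norm_mul]
    apply mul_le_mul (hcb j) _ (norm_nonneg _) hM0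
    calc ‖1 - q ^ j‖ ≤ ‖(1:ℂ)‖ + ‖q ^ j‖ := norm_sub_le _ _
    _ ≤ 1 + 1 := by rw [norm_one]; linarith [hqj j]
    _ = 2 := by norm_num
  have sh : Summable (fun j : ℕ => qc a q j * (1 - a * q ^ j) * w * w ^ j) := by
    apply summable_mul_geo _ (M * (1 + ‖a‖) * ‖w‖) _ w hw
    intro j
    rw [norm_mul, norm_mul]
    apply mul_le_mul _ le_rfl (norm_nonneg _) (by positivity)
    apply mul_le_mul (hcb j) _ (norm_nonneg _) hM0
    calc ‖1 - a * q ^ j‖ ≤ ‖(1:ℂ)‖ + ‖a * q ^ j‖ := norm_sub_le _ _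
    _ = 1 + ‖a‖ * ‖q ^ j‖ := by rw [norm_one, norm_mul]
    _ ≤ 1 + ‖a‖ * 1 := by
        have := mul_le_mul_of_nonneg_left (hqj j) (norm_nonneg a)
        linarith
    _ = 1 + ‖a‖ := by ring
  -- rewrite both sides as tsums
  have e1 : (1 - w) * qS a q w = ∑' j : ℕ, qc a q j * (1 - w) * w ^ j := by
    rw [qS, ← tsum_mul_left]
    exact tsum_congr fun j => by ring
  have e2 : (1 - a * w) * qS a q (q * w) =
      ∑' j : ℕ, qc a q j * q ^ j * (1 - a * w) * w ^ j := by
    rw [qS, ← tsum_mul_left]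
    exact tsum_congr fun j => by rw [mul_pow]; ring
  rw [e1, e2, ← sub_eq_zero, ← Summable.tsum_sub s1 s2]
  have e3 : ∀ j : ℕ, qc a q j * (1 - w) * w ^ j - qc a q j * q ^ j * (1 - a * w) * w ^ j =
      qc a q j * (1 - q ^ j) * w ^ j - qc a q j * (1 - a * q ^ j) * w * w ^ j := by
    intro j; ring
  rw [tsum_congr e3, Summable.tsum_sub sg sh]
  have e4 : ∑' j : ℕ, qc a q j * (1 - q ^ j) * w ^ j =
      ∑' j : ℕ, qc a q j * (1 - a * q ^ j) * w * w ^ j := by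
    rw [Summable.tsum_eq_zero_add sg]
    simp only [pow_zero, pow_succ]
    have e5 : ∀ j : ℕ, qc a q (j+1) * (1 - q ^ j * q) * (w ^ j * w) =
        qc a q j * (1 - a * q ^ j) * w * w ^ j := by
      intro j
      rw [← pow_succ, qc_rec a q hq j]
      ring
    rw [tsum_congr e5]
    simp
  rw [e4, sub_self]

lemma qS_iter (a q z : ℂ) (hq : ‖q‖ < 1) (hz : ‖z‖ < 1) (n : ℕ) :
    qS a q z * qPoch z q n = qPoch (a * z) q n * qS a q (q ^ n * z) := by
  induction n with
  | zero => simp [qPoch]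
  | succ n ih =>
    have hwn : ‖q ^ n * z‖ < 1 := by
      rw [norm_mul, norm_pow]
      calc ‖q‖ ^ n * ‖z‖ ≤ 1 * ‖z‖ := by
            apply mul_le_mul_of_nonneg_right (pow_le_one₀ (norm_nonneg q) hq.le) (norm_nonneg z)
      _ < 1 := by simpa using hz
    have hf := qS_funct a q hq (q ^ n * z) hwn
    have h1 : qPoch z q (n+1) = qPoch z q n * (1 - z * q ^ n) := Finset.prod_range_succ _ _
    have h2 : qPoch (a*z) q (n+1) = qPoch (a*z) q n * (1 - a * z * q ^ n) := by
      rw [qPoch, Finset.prod_range_succ, ← qPoch, mul_assoc]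
    have h3 : (1 : ℂ) - q ^ n * z = 1 - z * q ^ n := by ring
    have h4 : q * (q ^ n * z) = q ^ (n+1) * z := by rw [pow_succ]; ring
    have h5 : (1 : ℂ) - a * (q ^ n * z) = 1 - a * z * q ^ n := by ring
    rw [h1, h2, ← mul_assoc, ih, mul_assoc, ← h3, mul_comm (qS a q (q ^ n * z)) _, hf,
      h4, h5]
    ring

lemma qS_tendsto_one (a q z : ℂ) (hq : ‖q‖ < 1) (hz : ‖z‖ < 1) :
    Tendsto (fun n : ℕ => qS a q (q ^ n * z)) atTop (nhds 1) := by
  set M := qM a q with hM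
  have hM0 : 0 ≤ M := qM_nonneg a q
  have hcb : ∀ j, ‖qc a q j‖ ≤ M := qc_bound a q hq
  have hzc : ∀ n : ℕ, ‖q ^ n * z‖ ≤ ‖z‖ := by
    intro n
    rw [norm_mul, norm_pow]
    calc ‖q‖ ^ n * ‖z‖ ≤ 1 * ‖z‖ := by
          apply mul_le_mul_of_nonneg_right (pow_le_one₀ (norm_nonneg q) hq.le) (norm_nonneg z)
    _ = ‖z‖ := one_mul _
  have key : ∀ w : ℂ, ‖w‖ ≤ ‖z‖ → ‖qS a q w - 1‖ ≤ M * (1 - ‖z‖)⁻¹ * ‖w‖ := by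
    intro w hw
    have hw1 : ‖w‖ < 1 := lt_of_le_of_lt hw hz
    have hsum : Summable (fun j : ℕ => qc a q j * w ^ j) :=
      summable_mul_geo _ M hcb w hw1
    have hsum1 : Summable (fun j : ℕ => qc a q (j+1) * w ^ (j+1)) := by
      have := hsum.comp_injective (add_left_injective 1)
      simpa [Function.comp_def] using this
    have hc0 : qc a q 0 = 1 := by simp [qc, qPoch]
    have e0 : qS a q w - 1 = ∑' j : ℕ, qc a q (j+1) * w ^ (j+1) := by
      rw [qS, Summable.tsum_eq_zero_add hsum, hc0]
      simp
    rw [e0]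
    have hb : ∀ j : ℕ, ‖qc a q (j+1) * w ^ (j+1)‖ ≤ M * ‖w‖ * ‖w‖ ^ j := by
      intro j
      rw [norm_mul, norm_pow, pow_succ]
      calc ‖qc a q (j+1)‖ * (‖w‖ ^ j * ‖w‖) ≤ M * (‖w‖ ^ j * ‖w‖) := by
            apply mul_le_mul_of_nonneg_right (hcb _) (by positivity)
      _ = M * ‖w‖ * ‖w‖ ^ j := by ring
    have hsb : Summable (fun j : ℕ => M * ‖w‖ * ‖w‖ ^ j) :=
      (summable_geometric_of_lt_one (norm_nonneg w) hw1).mul_left _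
    calc ‖∑' j : ℕ, qc a q (j+1) * w ^ (j+1)‖ ≤ ∑' j : ℕ, M * ‖w‖ * ‖w‖ ^ j := by
          apply tsum_of_norm_bounded hsb.hasSum hb
    _ = M * ‖w‖ * (1 - ‖w‖)⁻¹ := by
          rw [tsum_mul_left, tsum_geometric_of_lt_one (norm_nonneg w) hw1]
    _ ≤ M * (1 - ‖z‖)⁻¹ * ‖w‖ := by
          have h1 : (1 - ‖w‖)⁻¹ ≤ (1 - ‖z‖)⁻¹ := by
            apply inv_anti₀ (by linarith) (by linarith)
          calc M * ‖w‖ * (1 - ‖w‖)⁻¹ ≤ M * ‖w‖ * (1 - ‖z‖)⁻¹ := by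
                apply mul_le_mul_of_nonneg_left h1 (by positivity)
          _ = M * (1 - ‖z‖)⁻¹ * ‖w‖ := by ring
  rw [tendsto_iff_norm_sub_tendsto_zero]
  apply squeeze_zero (fun n => norm_nonneg _)
    (fun n => key _ (hzc n))
  have : Tendsto (fun n : ℕ => M * (1 - ‖z‖)⁻¹ * (‖q‖ ^ n * ‖z‖)) atTop (nhds 0) := by
    have h0 : Tendsto (fun n : ℕ => ‖q‖ ^ n) atTop (nhds 0) :=
      tendsto_pow_atTop_nhds_zero_of_lt_one (norm_nonneg q) hq
    have := (h0.mul_const ‖z‖).const_mul (M * (1 - ‖z‖)⁻¹)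
    simpa using this
  apply this.congr
  intro n
  rw [norm_mul, norm_pow]

theorem stmt19 (q z a : ℂ) (hq : ‖q‖ < 1) (hz : ‖z‖ < 1) :
    (∏' l : ℕ, (1 - a * z * q ^ l)) / (∏' l : ℕ, (1 - z * q ^ l)) =
        ∑' j : ℕ, qPoch a q j / qPoch q q j * z ^ j ∧
      Summable (fun j : ℕ => ‖qPoch a q j / qPoch q q j * z ^ j‖) := by
  have hS_eq : (∑' j : ℕ, qPoch a q j / qPoch q q j * z ^ j) = qS a q z := by
    rw [qS]
    exact tsum_congr fun j => by rw [qc]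
  constructor
  · have hP := aux_hasprod z q hq
    have hPa := aux_hasprod (a * z) q hq
    have hPz_ne := aux_tprod_ne_zero z q hz hq
    have h1 : Tendsto (fun n : ℕ => qS a q z * qPoch z q n) atTop
        (nhds (qS a q z * ∏' l : ℕ, (1 - z * q ^ l))) :=
      hP.tendsto_prod_nat.const_mul _
    have h2 : Tendsto (fun n : ℕ => qPoch (a * z) q n * qS a q (q ^ n * z)) atTop
        (nhds ((∏' l : ℕ, (1 - a * z * q ^ l)) * 1)) :=
      hPa.tendsto_prod_nat.mul (qS_tendsto_one a q z hq hz)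
    have heq := tendsto_nhds_unique (h1.congr (fun n => qS_iter a q z hq hz n)) h2
    rw [mul_one] at heq
    rw [div_eq_iff hPz_ne, hS_eq]
    exact heq.symm
  · have hg : Summable (fun j : ℕ => qM a q * ‖z‖ ^ j) :=
      (summable_geometric_of_lt_one (norm_nonneg z) hz).mul_left _
    have hle : ∀ j : ℕ, ‖qPoch a q j / qPoch q q j * z ^ j‖ ≤ qM a q * ‖z‖ ^ j := by
      intro j
      rw [norm_mul, norm_pow]
      have h : ‖qPoch a q j / qPoch q q j‖ = ‖qc a q j‖ := by rw [qc]
      rw [h]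
      exact mul_le_mul_of_nonneg_right (qc_bound a q hq j) (by positivity)
    exact Summable.of_nonneg_of_le (fun j => norm_nonneg _) hle hg
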